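/- Let X be a biquandle and φ : X × X → X × X the map φ(x,y) = (x ▷ y, y ▷ y). Then φ is a bijection, and writing φⁿ(x,y) = (fₙ(x,y), gₙ(x,y)) for n ∈ ℤ, one has gₙ(x,y) = fₙ(y,y) for all x, y ∈ X and all n ∈ ℤ. -/

import Mathlib

/-- A biquandle: a set with two binary operations `u` (underline-star, `▷`) and
`o` (overline-star, `▷̄`) satisfying axioms (B1), (B2), (B3). -/
structure Biquandle (X : Type*) where
  u : X → X → X
  o : X → X → X
  b1 : ∀ x, u x x = o x x
  b2u : ∀ a, Function.Bijective fun x => u x a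
  b2o : ∀ a, Function.Bijective fun x => o x a
  b2S : Function.Bijective fun p : X × X => (o p.2 p.1, u p.1 p.2)
  b3uu : ∀ x y z, u (u x y) (u z y) = u (u x z) (o y z)
  b3uo : ∀ x y z, o (u x y) (u z y) = u (o x z) (o y z)
  b3oo : ∀ x y z, o (o x y) (o z y) = o (o x z) (u y z)

/-- The kink map `x ↦ x ▷ x` of a biquandle is bijective. -/
lemma Biquandle.kink_bijective {X : Type*} (B : Biquandle X) :
    Function.Bijective fun x => B.u x x := by
  constructor
  · intro x y h
    simp only at h
    have hS : (B.o x x, B.u x x) = (B.o y y, B.u y y) := by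
      rw [← B.b1 x, ← B.b1 y, h]
    have := B.b2S.injective (a₁ := (x, x)) (a₂ := (y, y)) (by simpa using hS)
    exact congrArg Prod.fst this
  · intro a
    obtain ⟨p, hp⟩ := B.b2S.surjective (a, a)
    simp only [Prod.mk.injEq] at hp
    obtain ⟨h1, h2⟩ := hp
    -- b3oo with x := p.2, y := p.1, z := p.2
    have h3 := B.b3oo p.2 p.1 p.2
    rw [h1] at h3
    -- h3 : B.o a a = B.o (B.o p.2 p.2) (B.u p.1 p.2)
    rw [h2] at h3
    have : a = B.o p.2 p.2 := (B.b2o a).injective h3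
    exact ⟨p.2, by simp [B.b1 p.2, ← this]⟩

theorem Equiv.Perm.apply_inv_self {α : Type*} (f : Equiv.Perm α) (x : α) : f (f⁻¹ x) = x :=
  f.apply_symm_apply x

theorem Equiv.Perm.inv_apply_self {α : Type*} (f : Equiv.Perm α) (x : α) : f⁻¹ (f x) = x :=
  f.symm_apply_apply x

theorem stmt16 {X : Type*} [Nonempty X] (B : Biquandle X) :
    ∃ φ : Equiv.Perm (X × X),
      (∀ p : X × X, φ p = (B.u p.1 p.2, B.u p.2 p.2)) ∧
      ∀ (n : ℤ) (x y : X), ((φ ^ n) (x, y)).2 = ((φ ^ n) (y, y)).1 := by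
  -- the kink map as a permutation
  set d : X → X := fun x => B.u x x with hd
  have hdbij : Function.Bijective d := B.kink_bijective
  let e : Equiv.Perm X := Equiv.ofBijective d hdbij
  have he : ∀ x, e x = d x := fun x => rfl
  -- the map φ
  have hbij : Function.Bijective (fun p : X × X => (B.u p.1 p.2, d p.2)) := by
    constructor
    · rintro ⟨x, y⟩ ⟨x', y'⟩ h
      simp only [Prod.mk.injEq] at h
      obtain ⟨h1, h2⟩ := h
      have hy : y = y' := hdbij.injective h2
      subst hy
      have hx : x = x' := (B.b2u y).injective h1
      simp [hx]
    · rintro ⟨a, b⟩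
      obtain ⟨y, hy⟩ := hdbij.surjective b
      obtain ⟨x, hx⟩ := (B.b2u y).surjective a
      exact ⟨(x, y), by simp only at hx; simp [hx, hy]⟩
  refine ⟨Equiv.ofBijective _ hbij, fun p => rfl, ?_⟩
  set φ : Equiv.Perm (X × X) := Equiv.ofBijective _ hbij with hφ
  have hφap : ∀ p : X × X, φ p = (B.u p.1 p.2, d p.2) := fun p => rfl
  -- second component of φ^n is e^n of the second component
  have hsnd : ∀ (n : ℤ) (p : X × X), ((φ ^ n) p).2 = (e ^ n) p.2 := by
    have h1 : ∀ p : X × X, (φ p).2 = e p.2 := fun p => rfl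
    have hinv : ∀ p : X × X, (φ⁻¹ p).2 = e⁻¹ p.2 := by
      intro p
      have := h1 (φ⁻¹ p)
      rw [Equiv.Perm.apply_inv_self] at this
      rw [this, Equiv.Perm.inv_apply_self]
    intro n
    induction n using Int.induction_on with
    | zero => intro p; simp
    | succ k ih =>
        intro p
        have : φ ^ ((k : ℤ) + 1) = φ ^ (k : ℤ) * φ := by
          rw [zpow_add_one]
        rw [this, zpow_add_one]
        simp only [Equiv.Perm.mul_apply]
        rw [ih, h1]
    | pred k ih =>
        intro p
        have : φ ^ (-(k : ℤ) - 1) = φ ^ (-(k : ℤ)) * φ⁻¹ := by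
          rw [zpow_sub_one]
        rw [this, zpow_sub_one]
        simp only [Equiv.Perm.mul_apply]
        rw [ih, hinv]
  -- φ^n preserves the diagonal
  have hdiag : ∀ (n : ℤ) (y : X), (φ ^ n) (y, y) = ((e ^ n) y, (e ^ n) y) := by
    have h1 : ∀ y : X, φ (y, y) = (e y, e y) := fun y => rfl
    have hinv : ∀ y : X, φ⁻¹ (y, y) = (e⁻¹ y, e⁻¹ y) := by
      intro y
      have := h1 (e⁻¹ y)
      rw [Equiv.Perm.apply_inv_self] at this
      rw [← this, Equiv.Perm.inv_apply_self]
    intro n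
    induction n using Int.induction_on with
    | zero => intro y; simp
    | succ k ih =>
        intro y
        rw [zpow_add_one, zpow_add_one]
        simp only [Equiv.Perm.mul_apply]
        rw [h1, ih]
    | pred k ih =>
        intro y
        rw [zpow_sub_one, zpow_sub_one]
        simp only [Equiv.Perm.mul_apply]
        rw [hinv, ih]
  intro n x y
  rw [hsnd n (x, y), hdiag n y]
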